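/- arXiv:2002.12666 — 2 statements merged into one kernel-verified Lean document; each statement's English description precedes it below -/
import Mathlib

section
/- Suppose that for every even L the linear functional ⟨·⟩ is reflection positive for reflections through edges and the two-point function G_L is torus symmetric, that there are constants C₁ > 0 and M ∈ (0,∞) such that liminf over even L → ∞ of (1/|T_L|) Σ_{x∈T_L} G_L(o,x) ≥ C₁, and G_L(x,y) ≤ M for all even L and all x, y ∈ T_L. Then for any φ ∈ (0, C₁/2) there exist ε > 0 and L₀ such that for every even L ≥ L₀, every i ∈ {1,…,d}, and every odd integer n with 0 < |n| < εL, one has G_L(o, n·e_i) ≥ φ. -/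
namespace RPPaper

/-- The torus `T_L = (ℤ/Lℤ)^d`. -/
abbrev Torus (d L : ℕ) : Type := Fin d → ZMod L

/-- The unit vector `e i`. -/
def unitVec {d L : ℕ} (i : Fin d) : Torus d L := fun k => if k = i then 1 else 0

/-- The point `a • e i` on the torus. -/
def axis {d L : ℕ} (i : Fin d) (a : ZMod L) : Torus d L := fun k => if k = i then a else 0

/-- The integer representative of `a : ZMod L` in the interval `(-L/2, L/2]`. -/
def coordRep (L : ℕ) [NeZero L] (a : ZMod L) : ℤ :=
  if (a.val : ℤ) ≤ (L : ℤ) / 2 then (a.val : ℤ) else (a.val : ℤ) - (L : ℤ)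

/-- The reflection of the torus in the hyperplane `{z : z·e i = t/2}` (here `t = 2m`);
it is a reflection through edges if `t` is odd, and through vertices if `t` is even. -/
def reflect {d L : ℕ} (i : Fin d) (t : ℕ) (x : Torus d L) : Torus d L :=
  Function.update x i ((t : ZMod L) - x i)

/-- The positive half `T_L^+` of the torus associated to the reflection in the hyperplane
`{z : z·e i = t/2}`. -/
def posHalf (d L : ℕ) [NeZero L] (i : Fin d) (t : ℕ) : Finset (Torus d L) :=
  if t % 2 = 1 then Finset.univ.filter (fun x => (x i - (((t + 1) / 2 : ℕ) : ZMod L)).val < L / 2)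
  else Finset.univ.filter (fun x => (x i - ((t / 2 : ℕ) : ZMod L)).val ≤ L / 2)

/-- The negative half `T_L^- = θ(T_L^+)`. -/
def negHalf (d L : ℕ) [NeZero L] (i : Fin d) (t : ℕ) : Finset (Torus d L) :=
  (posHalf d L i t).image (reflect i t)

/-- The state space `S = ∏_{x ∈ T_L} Σ_x` (all local state spaces equal to `Sig`). -/
abbrev MState (d L : ℕ) (Sig : Type*) : Type _ := Torus d L → Sig

/-- `A : S → ℝ` has domain `D` if it depends only on the local states in `D`. -/
def HasDomain {d L : ℕ} {Sig : Type*} (A : MState d L Sig → ℝ) (D : Set (Torus d L)) : Prop :=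
  ∀ w₁ w₂ : MState d L Sig, (∀ x ∈ D, w₁ x = w₂ x) → A w₁ = A w₂

/-- The action `θA (w) = A (θ w)`, where `(θ w) x = w (θ x)`, of the reflection on functions. -/
def reflectFun {d L : ℕ} {Sig : Type*} (i : Fin d) (t : ℕ) (A : MState d L Sig → ℝ) :
    MState d L Sig → ℝ := fun w => A (fun x => w (reflect i t x))

/-- `⟨·⟩` is reflection positive with respect to the reflection in the hyperplane
`{z : z·e i = t/2}`: for all `A, B ∈ A_L^+` (members of the algebra with domain `T_L^+`),
`⟨A·θB⟩ = ⟨B·θA⟩` and `⟨A·θA⟩ ≥ 0`. -/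
def IsRP {d L : ℕ} {Sig : Type*} [NeZero L] (AL : Subalgebra ℝ (MState d L Sig → ℝ))
    (phi : (MState d L Sig → ℝ) →ₗ[ℝ] ℝ) (i : Fin d) (t : ℕ) : Prop :=
  ∀ A B : MState d L Sig → ℝ, A ∈ AL → B ∈ AL →
    HasDomain A ↑(posHalf d L i t) → HasDomain B ↑(posHalf d L i t) →
    phi (A * reflectFun i t B) = phi (B * reflectFun i t A) ∧ 0 ≤ phi (A * reflectFun i t A)

/-- Reflection positivity for all reflections through edges. -/
def RPEdges {d L : ℕ} {Sig : Type*} [NeZero L] (AL : Subalgebra ℝ (MState d L Sig → ℝ))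
    (phi : (MState d L Sig → ℝ) →ₗ[ℝ] ℝ) : Prop :=
  ∀ (i : Fin d) (t : ℕ), t < 2 * L → t % 2 = 1 → IsRP AL phi i t

/-- Reflection positivity for all reflections through vertices. -/
def RPVertices {d L : ℕ} {Sig : Type*} [NeZero L] (AL : Subalgebra ℝ (MState d L Sig → ℝ))
    (phi : (MState d L Sig → ℝ) →ₗ[ℝ] ℝ) : Prop :=
  ∀ (i : Fin d) (t : ℕ), t < 2 * L → t % 2 = 0 → IsRP AL phi i t

/-- The single-site function `F^j_x`, obtained from a function `f : Sig → ℝ` of the local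
state at the origin by the (path-independent) sequence of reflections sending `o` to `x`. -/
def site {d L : ℕ} {Sig : Type*} (f : Sig → ℝ) (x : Torus d L) : MState d L Sig → ℝ :=
  fun w => f (w x)

/-- The two-point function `G_L(x,y) = ⟨F²_x F²_y ∏_{z ≠ x,y} F¹_z⟩`. -/
noncomputable def twoPoint {d L : ℕ} {Sig : Type*} [NeZero L]
    (phi : (MState d L Sig → ℝ) →ₗ[ℝ] ℝ) (f1 f2 : Sig → ℝ) (x y : Torus d L) : ℝ :=
  phi (fun w => f2 (w x) * f2 (w y) * ∏ z ∈ (Finset.univ.erase x).erase y, f1 (w z))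

/-- Torus symmetry: `⟨∏_{x∈A}F¹_x ∏_{x∈B}F²_x⟩ = ⟨∏_{x∈A+z}F¹_x ∏_{x∈B+z}F²_x⟩`. -/
def TorusSymmetric {d L : ℕ} {Sig : Type*} [NeZero L]
    (phi : (MState d L Sig → ℝ) →ₗ[ℝ] ℝ) (f1 f2 : Sig → ℝ) : Prop :=
  ∀ (A B : Finset (Torus d L)) (z : Torus d L),
    phi (fun w => (∏ x ∈ A, f1 (w x)) * ∏ x ∈ B, f2 (w x)) =
      phi (fun w => (∏ x ∈ A, f1 (w (x + z))) * ∏ x ∈ B, f2 (w (x + z)))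


section Aux
set_option linter.unusedSectionVars false

variable {d L : ℕ} [NeZero L]

lemma reflect_reflect (i : Fin d) (t : ℕ) (x : Torus d L) :
    reflect i t (reflect i t x) = x := by
  funext k
  by_cases h : k = i
  · subst h; simp [reflect]
  · simp [reflect, Function.update_of_ne h]

lemma reflect_inj (i : Fin d) (t : ℕ) : Function.Injective (reflect i t : Torus d L → Torus d L) :=
  Function.Involutive.injective (reflect_reflect i t)

lemma castL1 (hL2 : 2 ≤ L) : ((L - 1 : ℕ) : ZMod L) = -1 := by
  have : ((L - 1 : ℕ) : ZMod L) = ((L : ℕ) : ZMod L) - 1 := by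
    rw [Nat.cast_sub (by omega)]; simp
  rw [this, ZMod.natCast_self]; ring

lemma castHalf (hL : Even L) : ((L / 2 : ℕ) : ZMod L) + ((L / 2 : ℕ) : ZMod L) = 0 := by
  rw [← Nat.cast_add]
  have h2 : L % 2 = 0 := Nat.even_iff.1 hL
  have : L / 2 + L / 2 = L := by omega
  rw [this, ZMod.natCast_self]

lemma val_neg_one_sub (hL2 : 2 ≤ L) (b : ZMod L) : (-1 - b).val = L - 1 - b.val := by
  have h1 : (-1 - b) = -(b + 1) := by ring
  rw [h1, ZMod.neg_val]
  by_cases hb : b + 1 = 0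
  · have hbv : b = -1 := by linear_combination hb
    have : b.val = L - 1 := by
      rw [hbv]
      have : (-1 : ZMod L) = ((L - 1 : ℕ) : ZMod L) := (castL1 hL2).symm
      rw [this, ZMod.val_cast_of_lt (by omega)]
    simp [hb, this]
  · haveI : Fact (1 < L) := ⟨by omega⟩
    have hbval : b.val ≠ L - 1 := by
      intro h
      apply hb
      have hb1 : b = ((L - 1 : ℕ) : ZMod L) := by
        rw [← h, ZMod.natCast_val b, ZMod.cast_id]
      rw [hb1, castL1 hL2]; ring
    have hlt : b.val + 1 < L := by
      have := ZMod.val_lt b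
      omega
    have : (b + 1).val = b.val + 1 := by
      rw [ZMod.val_add_of_lt] <;> rw [ZMod.val_one] <;> omega
    rw [if_neg hb, this]
    omega

lemma mem_posHalf_iff (hL : Even L) (hL2 : 2 ≤ L) {i : Fin d} {x : Torus d L} :
    x ∈ posHalf d L i (L - 1) ↔ (x i - ((L / 2 : ℕ) : ZMod L)).val < L / 2 := by
  have h2 : L % 2 = 0 := Nat.even_iff.1 hL
  have h1 : (L - 1) % 2 = 1 := by omega
  have h3 : (L - 1 + 1) / 2 = L / 2 := by omega
  rw [posHalf, if_pos h1, Finset.mem_filter, h3]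
  simp

lemma reflect_mem_posHalf (hL : Even L) (hL2 : 2 ≤ L) {i : Fin d} (x : Torus d L) :
    reflect i (L - 1) x ∈ posHalf d L i (L - 1) ↔ x ∉ posHalf d L i (L - 1) := by
  rw [mem_posHalf_iff hL hL2, mem_posHalf_iff hL hL2]
  have hcc : ((L / 2 : ℕ) : ZMod L) = -((L / 2 : ℕ) : ZMod L) := by
    rw [eq_neg_iff_add_eq_zero]; exact castHalf hL
  have hval : reflect i (L - 1) x i - ((L / 2 : ℕ) : ZMod L)
      = -1 - (x i - ((L / 2 : ℕ) : ZMod L)) := by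
    have h0 : (reflect i (L - 1) x) i = ((L - 1 : ℕ) : ZMod L) - x i := by
      simp [reflect]
    rw [h0, castL1 hL2]
    linear_combination -hcc
  rw [hval, val_neg_one_sub hL2]
  have hv : (x i - ((L / 2 : ℕ) : ZMod L)).val < L := ZMod.val_lt _
  have h2 : L % 2 = 0 := Nat.even_iff.1 hL
  omega

lemma mem_negHalf_iff (hL : Even L) (hL2 : 2 ≤ L) {i : Fin d} (x : Torus d L) :
    x ∈ negHalf d L i (L - 1) ↔ x ∉ posHalf d L i (L - 1) := by
  constructor
  · intro h
    rw [negHalf, Finset.mem_image] at h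
    obtain ⟨y, hy, rfl⟩ := h
    intro hmem
    rw [reflect_mem_posHalf hL hL2] at hmem
    exact hmem hy
  · intro h
    rw [negHalf, Finset.mem_image]
    exact ⟨reflect i (L - 1) x, (reflect_mem_posHalf hL hL2 x).2 h, reflect_reflect _ _ _⟩

end Aux

section TwoPoint
set_option linter.unusedSectionVars false
variable {d L : ℕ} [NeZero L] {Sig : Type*}
  (phi : (MState d L Sig → ℝ) →ₗ[ℝ] ℝ) (f1 f2 : Sig → ℝ)

lemma twoPoint_comm (x y : Torus d L) :
    twoPoint phi f1 f2 x y = twoPoint phi f1 f2 y x := by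
  unfold twoPoint
  congr 1
  funext w
  rw [Finset.erase_right_comm, mul_comm (f2 (w x)) (f2 (w y))]

lemma twoPoint_as_prods {x y : Torus d L} (hxy : x ≠ y) :
    twoPoint phi f1 f2 x y =
      phi (fun w => (∏ u ∈ (Finset.univ.erase x).erase y, f1 (w u)) *
        ∏ u ∈ ({x, y} : Finset (Torus d L)), f2 (w u)) := by
  unfold twoPoint
  congr 1
  funext w
  rw [Finset.prod_pair hxy]
  ring

lemma twoPoint_translate (hsym : TorusSymmetric phi f1 f2) {x y : Torus d L}
    (hxy : x ≠ y) (z : Torus d L) :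
    twoPoint phi f1 f2 x y = twoPoint phi f1 f2 (x + z) (y + z) := by
  have hinj : Function.Injective (fun a : Torus d L => a + z) := add_left_injective z
  have himg : Finset.univ.image (fun a : Torus d L => a + z) = Finset.univ := by
    apply Finset.eq_univ_iff_forall.2
    intro a
    exact Finset.mem_image.2 ⟨a - z, Finset.mem_univ _, by ring⟩
  have hxy' : x + z ≠ y + z := fun h => hxy (hinj h)
  rw [twoPoint_as_prods phi f1 f2 hxy, twoPoint_as_prods phi f1 f2 hxy',
    hsym ((Finset.univ.erase x).erase y) ({x, y}) z]
  congr 1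
  funext w
  have h1 : ∀ (s : Finset (Torus d L)) (g : Torus d L → ℝ),
      ∏ u ∈ s, g (u + z) = ∏ u ∈ s.image (fun a => a + z), g u := by
    intro s g
    rw [Finset.prod_image (fun a _ b _ h => hinj h)]
  rw [h1 _ (fun u => f1 (w u)), h1 _ (fun u => f2 (w u))]
  rw [Finset.image_erase hinj, Finset.image_erase hinj, himg]
  congr 2
  simp [Finset.image_insert]

lemma twoPoint_neg (hsym : TorusSymmetric phi f1 f2) (v : Torus d L) :
    twoPoint phi f1 f2 0 (-v) = twoPoint phi f1 f2 0 v := by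
  by_cases hv : v = 0
  · subst hv; simp
  · have h0 : (0 : Torus d L) ≠ -v := by
      intro h; exact hv (by rw [← neg_neg v, ← h]; simp)
    rw [twoPoint_translate phi f1 f2 hsym h0 v]
    simp only [zero_add, neg_add_cancel]
    exact twoPoint_comm phi f1 f2 v 0

end TwoPoint


section Obs
set_option linter.unusedSectionVars false
variable {d L : ℕ} [NeZero L] {Sig : Type*}
  (phi : (MState d L Sig → ℝ) →ₗ[ℝ] ℝ) (f1 f2 : Sig → ℝ)

/-- The observable `F²_X ∏_{z ∈ T⁺∖{X}} F¹_z`. -/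
def obs (f1 f2 : Sig → ℝ) (i : Fin d) (X : Torus d L) : MState d L Sig → ℝ :=
  fun w => f2 (w X) * ∏ z ∈ (posHalf d L i (L - 1)).erase X, f1 (w z)

lemma obs_mem (AL : Subalgebra ℝ (MState d L Sig → ℝ))
    (hF1 : ∀ x, site f1 x ∈ AL) (hF2 : ∀ x, site f2 x ∈ AL) (i : Fin d) (X : Torus d L) :
    obs f1 f2 i X ∈ AL := by
  have hobs : obs f1 f2 i X
      = site f2 X * ∏ z ∈ (posHalf d L i (L - 1)).erase X, site f1 z := by
    funext w
    simp [obs, site, Finset.prod_apply]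
  rw [hobs]
  exact AL.mul_mem (hF2 X) (AL.prod_mem fun z _ => hF1 z)

lemma obs_domain (i : Fin d) {X : Torus d L} (hX : X ∈ posHalf d L i (L - 1)) :
    HasDomain (obs f1 f2 i X) ↑(posHalf d L i (L - 1)) := by
  intro w₁ w₂ hw
  unfold obs
  rw [hw X (Finset.mem_coe.2 hX)]
  congr 1
  apply Finset.prod_congr rfl
  intro z hz
  rw [hw z (Finset.mem_coe.2 (Finset.mem_of_mem_erase hz))]

lemma hasDomain_sub {A B : MState d L Sig → ℝ} {D : Set (Torus d L)}
    (hA : HasDomain A D) (hB : HasDomain B D) : HasDomain (A - B) D := by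
  intro w₁ w₂ hw
  simp only [Pi.sub_apply, hA w₁ w₂ hw, hB w₁ w₂ hw]

lemma reflectFun_sub (i : Fin d) (t : ℕ) (A B : MState d L Sig → ℝ) :
    reflectFun i t (A - B) = reflectFun i t A - reflectFun i t B := rfl

lemma reflectFun_obs (hL : Even L) (hL2 : 2 ≤ L) (i : Fin d) (Y : Torus d L) :
    reflectFun i (L - 1) (obs f1 f2 i Y) =
      fun w => f2 (w (reflect i (L - 1) Y)) *
        ∏ z ∈ (negHalf d L i (L - 1)).erase (reflect i (L - 1) Y), f1 (w z) := by
  funext w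
  show f2 (w (reflect i (L - 1) Y)) * ∏ z ∈ (posHalf d L i (L - 1)).erase Y,
      f1 (w (reflect i (L - 1) z)) = _
  congr 1
  rw [negHalf, ← Finset.image_erase (reflect_inj i (L - 1)),
    Finset.prod_image (fun a _ b _ h => reflect_inj i (L - 1) h)]

lemma obs_mul (hL : Even L) (hL2 : 2 ≤ L) (i : Fin d) {X Y : Torus d L}
    (hX : X ∈ posHalf d L i (L - 1)) (hY : Y ∈ posHalf d L i (L - 1)) :
    obs f1 f2 i X * reflectFun i (L - 1) (obs f1 f2 i Y) =
      fun w => f2 (w X) * f2 (w (reflect i (L - 1) Y)) *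
        ∏ z ∈ (Finset.univ.erase X).erase (reflect i (L - 1) Y), f1 (w z) := by
  have hYn : reflect i (L - 1) Y ∈ negHalf d L i (L - 1) := by
    rw [negHalf, Finset.mem_image]; exact ⟨Y, hY, rfl⟩
  have hYnp : reflect i (L - 1) Y ∉ posHalf d L i (L - 1) :=
    (mem_negHalf_iff hL hL2 _).1 hYn
  have hdisj : Disjoint ((posHalf d L i (L - 1)).erase X)
      ((negHalf d L i (L - 1)).erase (reflect i (L - 1) Y)) := by
    rw [Finset.disjoint_left]
    intro a ha hb
    exact (mem_negHalf_iff hL hL2 a).1 (Finset.mem_of_mem_erase hb)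
      (Finset.mem_of_mem_erase ha)
  have hunion : ((posHalf d L i (L - 1)).erase X) ∪
      ((negHalf d L i (L - 1)).erase (reflect i (L - 1) Y)) =
      (Finset.univ.erase X).erase (reflect i (L - 1) Y) := by
    ext z
    simp only [Finset.mem_union, Finset.mem_erase, Finset.mem_univ, and_true,
      mem_negHalf_iff hL hL2]
    constructor
    · rintro (⟨hzX, hz⟩ | ⟨hzY, hz⟩)
      · exact ⟨fun h => hYnp (h ▸ hz), hzX⟩
      · exact ⟨hzY, fun h => hz (h ▸ hX)⟩
    · rintro ⟨hzY, hzX⟩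
      by_cases hz : z ∈ posHalf d L i (L - 1)
      · exact Or.inl ⟨hzX, hz⟩
      · exact Or.inr ⟨hzY, hz⟩
  funext w
  rw [reflectFun_obs f1 f2 hL hL2]
  show (f2 (w X) * _) * (f2 (w (reflect i (L - 1) Y)) * _) = _
  rw [← hunion, Finset.prod_union hdisj]
  ring

lemma phi_obs_mul (hL : Even L) (hL2 : 2 ≤ L) (i : Fin d) {X Y : Torus d L}
    (hX : X ∈ posHalf d L i (L - 1)) (hY : Y ∈ posHalf d L i (L - 1)) :
    phi (obs f1 f2 i X * reflectFun i (L - 1) (obs f1 f2 i Y)) =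
      twoPoint phi f1 f2 X (reflect i (L - 1) Y) := by
  rw [obs_mul f1 f2 hL hL2 i hX hY]
  rfl

lemma rp_nonneg (hL : Even L) (hL2 : 2 ≤ L) (AL : Subalgebra ℝ (MState d L Sig → ℝ))
    (hF1 : ∀ x, site f1 x ∈ AL) (hF2 : ∀ x, site f2 x ∈ AL)
    {i : Fin d} (hrp : IsRP AL phi i (L - 1)) {X : Torus d L}
    (hX : X ∈ posHalf d L i (L - 1)) :
    0 ≤ twoPoint phi f1 f2 X (reflect i (L - 1) X) := by
  rw [← phi_obs_mul phi f1 f2 hL hL2 i hX hX]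
  exact (hrp _ _ (obs_mem f1 f2 AL hF1 hF2 i X) (obs_mem f1 f2 AL hF1 hF2 i X)
    (obs_domain f1 f2 i hX) (obs_domain f1 f2 i hX)).2

lemma rp_amgm (hL : Even L) (hL2 : 2 ≤ L) (AL : Subalgebra ℝ (MState d L Sig → ℝ))
    (hF1 : ∀ x, site f1 x ∈ AL) (hF2 : ∀ x, site f2 x ∈ AL)
    {i : Fin d} (hrp : IsRP AL phi i (L - 1)) {X Y : Torus d L}
    (hX : X ∈ posHalf d L i (L - 1)) (hY : Y ∈ posHalf d L i (L - 1)) :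
    twoPoint phi f1 f2 X (reflect i (L - 1) Y) ≤
      (twoPoint phi f1 f2 X (reflect i (L - 1) X)
        + twoPoint phi f1 f2 Y (reflect i (L - 1) Y)) / 2 := by
  have hAmem := obs_mem f1 f2 AL hF1 hF2 i X
  have hBmem := obs_mem f1 f2 AL hF1 hF2 i Y
  have hAdom := obs_domain f1 f2 i hX
  have hBdom := obs_domain f1 f2 i hY
  have hsymm := (hrp _ _ hAmem hBmem hAdom hBdom).1
  have hpos := (hrp (obs f1 f2 i X - obs f1 f2 i Y) (obs f1 f2 i X - obs f1 f2 i Y)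
    (AL.sub_mem hAmem hBmem) (AL.sub_mem hAmem hBmem)
    (hasDomain_sub hAdom hBdom) (hasDomain_sub hAdom hBdom)).2
  have hexp : (obs f1 f2 i X - obs f1 f2 i Y) * reflectFun i (L - 1) (obs f1 f2 i X - obs f1 f2 i Y)
      = obs f1 f2 i X * reflectFun i (L - 1) (obs f1 f2 i X)
        - obs f1 f2 i X * reflectFun i (L - 1) (obs f1 f2 i Y)
        - obs f1 f2 i Y * reflectFun i (L - 1) (obs f1 f2 i X)
        + obs f1 f2 i Y * reflectFun i (L - 1) (obs f1 f2 i Y) := by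
    rw [reflectFun_sub]
    ring
  rw [hexp, map_add, map_sub, map_sub] at hpos
  rw [phi_obs_mul phi f1 f2 hL hL2 i hX hX, phi_obs_mul phi f1 f2 hL hL2 i hX hY,
    phi_obs_mul phi f1 f2 hL hL2 i hY hX, phi_obs_mul phi f1 f2 hL hL2 i hY hY] at hpos
  rw [phi_obs_mul phi f1 f2 hL hL2 i hX hY, phi_obs_mul phi f1 f2 hL hL2 i hY hX] at hsymm
  linarith

end Obs


section Key
set_option linter.unusedSectionVars false
variable {d L : ℕ} [NeZero L] {Sig : Type*}
  (phi : (MState d L Sig → ℝ) →ₗ[ℝ] ℝ) (f1 f2 : Sig → ℝ) (i : Fin d)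

lemma axis_neg (a : ZMod L) : axis i (-a) = - axis (L := L) i a := by
  funext k
  by_cases h : k = i <;> simp [axis, h]

lemma mem_posHalf_coord (hL : Even L) (hL2 : 2 ≤ L) {W : Torus d L} {m : ℕ}
    (hm : m < L / 2) (hW : W i = ((L / 2 + m : ℕ) : ZMod L)) :
    W ∈ posHalf d L i (L - 1) := by
  rw [mem_posHalf_iff hL hL2, hW]
  have h1 : ((L / 2 + m : ℕ) : ZMod L) - ((L / 2 : ℕ) : ZMod L) = ((m : ℕ) : ZMod L) := by
    push_cast; ring
  rw [h1, ZMod.val_cast_of_lt (by omega)]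
  exact hm

lemma reflect_sub_self (hL : Even L) (hL2 : 2 ≤ L) {W : Torus d L} {m : ℕ}
    (hW : W i = ((L / 2 + m : ℕ) : ZMod L)) :
    reflect i (L - 1) W - W = axis i (-((2 * m + 1 : ℕ) : ZMod L)) := by
  funext k
  show reflect i (L - 1) W k - W k = _
  by_cases h : k = i
  · simp only [reflect, axis, Function.update_apply, if_pos h, h]
    rw [castL1 hL2, hW]
    push_cast
    linear_combination -castHalf (L := L) hL
  · simp [reflect, Function.update_of_ne h, axis, h]

lemma ne_reflect_of_mem (hL : Even L) (hL2 : 2 ≤ L) {X W : Torus d L}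
    (hX : X ∈ posHalf d L i (L - 1)) (hW : W ∈ posHalf d L i (L - 1)) :
    X ≠ reflect i (L - 1) W := by
  intro h
  rw [h] at hX
  exact (reflect_mem_posHalf hL hL2 W).1 hX hW

lemma twoPoint_to_g (hsym : TorusSymmetric phi f1 f2) {X Z : Torus d L} (hXZ : X ≠ Z) :
    twoPoint phi f1 f2 X Z = twoPoint phi f1 f2 0 (Z - X) := by
  rw [twoPoint_translate phi f1 f2 hsym hXZ (-X), add_neg_cancel, ← sub_eq_add_neg]

lemma key_ineq (hL : Even L) (hL2 : 2 ≤ L) (AL : Subalgebra ℝ (MState d L Sig → ℝ))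
    (hF1 : ∀ x, site f1 x ∈ AL) (hF2 : ∀ x, site f2 x ∈ AL)
    (hrp : IsRP AL phi i (L - 1)) (hsym : TorusSymmetric phi f1 f2)
    (u : Torus d L) (j m : ℕ) (hj : j < L / 2) (hm : m < L / 2)
    (hu : u i = -((j + m + 1 : ℕ) : ZMod L)) :
    twoPoint phi f1 f2 0 u ≤
      (twoPoint phi f1 f2 0 (axis i ((2 * j + 1 : ℕ) : ZMod L))
        + twoPoint phi f1 f2 0 (axis i ((2 * m + 1 : ℕ) : ZMod L))) / 2 := by
  set X : Torus d L := axis i ((L / 2 + j : ℕ) : ZMod L) with hXdef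
  set Y : Torus d L := Function.update u i ((L / 2 + m : ℕ) : ZMod L) with hYdef
  have hXi : X i = ((L / 2 + j : ℕ) : ZMod L) := by simp [hXdef, axis]
  have hYi : Y i = ((L / 2 + m : ℕ) : ZMod L) := by simp [hYdef]
  have hXmem := mem_posHalf_coord i hL hL2 hj hXi
  have hYmem := mem_posHalf_coord i hL hL2 hm hYi
  have hineq := rp_amgm phi f1 f2 hL hL2 AL hF1 hF2 hrp hXmem hYmem
  have hXne := ne_reflect_of_mem i hL hL2 hXmem hXmem
  have hYne := ne_reflect_of_mem i hL hL2 hYmem hYmem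
  have hXYne := ne_reflect_of_mem i hL hL2 hXmem hYmem
  rw [twoPoint_to_g phi f1 f2 hsym hXne, twoPoint_to_g phi f1 f2 hsym hYne,
    twoPoint_to_g phi f1 f2 hsym hXYne] at hineq
  rw [reflect_sub_self i hL hL2 hXi, reflect_sub_self i hL hL2 hYi] at hineq
  rw [axis_neg, axis_neg, twoPoint_neg phi f1 f2 hsym, twoPoint_neg phi f1 f2 hsym] at hineq
  have huXY : reflect i (L - 1) Y - X = u := by
    funext k
    show reflect i (L - 1) Y k - X k = u k
    by_cases h : k = i
    · simp only [reflect, Function.update_apply, if_pos h, h]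
      rw [castL1 hL2, hYi, hXi, hu]
      push_cast
      linear_combination -castHalf (L := L) hL
    · have h1 : reflect i (L - 1) Y k = Y k := by
        simp [reflect, Function.update_of_ne h]
      have h2 : Y k = u k := by simp [hYdef, Function.update_of_ne h]
      have h3 : X k = 0 := by simp [hXdef, axis, h]
      rw [h1, h2, h3, sub_zero]
  rw [huXY] at hineq
  exact hineq

lemma pos_ineq (hL : Even L) (hL2 : 2 ≤ L) (AL : Subalgebra ℝ (MState d L Sig → ℝ))
    (hF1 : ∀ x, site f1 x ∈ AL) (hF2 : ∀ x, site f2 x ∈ AL)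
    (hrp : IsRP AL phi i (L - 1)) (hsym : TorusSymmetric phi f1 f2)
    (j : ℕ) (hj : j < L / 2) :
    0 ≤ twoPoint phi f1 f2 0 (axis i ((2 * j + 1 : ℕ) : ZMod L)) := by
  set X : Torus d L := axis i ((L / 2 + j : ℕ) : ZMod L) with hXdef
  have hXi : X i = ((L / 2 + j : ℕ) : ZMod L) := by simp [hXdef, axis]
  have hXmem := mem_posHalf_coord i hL hL2 hj hXi
  have hpos := rp_nonneg phi f1 f2 hL hL2 AL hF1 hF2 hrp hXmem
  have hXne := ne_reflect_of_mem i hL hL2 hXmem hXmem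
  rw [twoPoint_to_g phi f1 f2 hsym hXne, reflect_sub_self i hL hL2 hXi,
    axis_neg, twoPoint_neg phi f1 f2 hsym] at hpos
  exact hpos

end Key

section Seq

lemma seq_mono (N : ℕ) (T : ℕ → ℝ)
    (hconv : ∀ j, j + 2 < N → T (j + 1) ≤ (T j + T (j + 2)) / 2)
    (hsymm : ∀ j, j ≤ N - 1 → T j = T (N - 1 - j)) :
    ∀ a b, a ≤ b → a + b + 1 ≤ N → T b ≤ T a := by
  set D : ℕ → ℝ := fun j => T (j + 1) - T j with hD
  have hDstep : ∀ j, j + 2 < N → D j ≤ D (j + 1) := by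
    intro j hj
    have := hconv j hj
    simp only [hD]
    linarith
  have hDmono : ∀ p q, p ≤ q → q + 1 < N → D p ≤ D q := by
    intro p q hpq
    induction q with
    | zero => intro _; have : p = 0 := by omega
              rw [this]
    | succ q ih =>
      intro hq
      rcases Nat.eq_or_lt_of_le hpq with h | h
      · rw [h]
      · exact le_trans (ih (by omega) (by omega)) (hDstep q (by omega))
  have hDneg : ∀ j, 2 * j + 2 ≤ N → D j ≤ 0 := by
    intro j hj
    have h1 : D j ≤ D (N - 2 - j) := by
      rcases Nat.eq_or_lt_of_le (show j ≤ N - 2 - j by omega) with h | h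
      · rw [← h]
      · exact hDmono j (N - 2 - j) (by omega) (by omega)
    have e1 : T (N - 1 - j) = T j := by
      rw [hsymm (N - 1 - j) (by omega)]
      congr 1
      omega
    have e2 : T (N - 2 - j) = T (j + 1) := by
      rw [hsymm (N - 2 - j) (by omega)]
      congr 1
      omega
    have e3 : (N - 2 - j) + 1 = N - 1 - j := by omega
    have h2 : D (N - 2 - j) = - D j := by
      simp only [hD, e3, e1, e2]
      ring
    linarith
  have hTstep : ∀ j, 2 * j + 2 ≤ N → T (j + 1) ≤ T j := by
    intro j hj
    have := hDneg j hj
    simp only [hD] at this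
    linarith
  have hmono : ∀ a b, a ≤ b → 2 * b ≤ N → T b ≤ T a := by
    intro a b hab
    induction b with
    | zero => intro _; have : a = 0 := by omega
              rw [this]
    | succ b ih =>
      intro hb
      rcases Nat.eq_or_lt_of_le hab with h | h
      · rw [h]
      · exact le_trans (hTstep b (by omega)) (ih (by omega) (by omega))
  intro a b hab hsum
  by_cases h2b : 2 * b ≤ N
  · exact hmono a b hab h2b
  · rw [hsymm b (by omega)]
    exact hmono a (N - 1 - b) (by omega) (by omega)

end Seq



set_option maxHeartbeats 2000000 in
/-- If the Cesàro sums of the two-point functions are uniformly bounded below by `C₁ > 0` and the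
two-point functions are uniformly bounded above, then for any `φ ∈ (0, C₁/2)` the two-point
function is at least `φ` at all odd points `n e i` with `0 < |n| < εL`, for some `ε > 0` and all
large even `L`. -/
theorem statement5 (d : ℕ) (hd : 2 ≤ d) (Sig : ℕ → Type*)
    (AL : ∀ L : ℕ, Subalgebra ℝ (MState d L (Sig L) → ℝ))
    (hfin : ∀ L : ℕ, FiniteDimensional ℝ (AL L))
    (phi : ∀ L : ℕ, (MState d L (Sig L) → ℝ) →ₗ[ℝ] ℝ)
    (hone : ∀ L : ℕ, phi L 1 = 1)
    (f1 f2 : ∀ L : ℕ, Sig L → ℝ)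
    (hF1 : ∀ (L : ℕ) (x : Torus d L), site (f1 L) x ∈ AL L)
    (hF2 : ∀ (L : ℕ) (x : Torus d L), site (f2 L) x ∈ AL L)
    (hRP : ∀ (L : ℕ) [NeZero L], Even L → RPEdges (AL L) (phi L))
    (hsym : ∀ (L : ℕ) [NeZero L], Even L → TorusSymmetric (phi L) (f1 L) (f2 L))
    (C₁ : ℝ) (hC₁ : 0 < C₁) (M : ℝ) (hM : 0 < M)
    (hliminf : ∀ δ : ℝ, 0 < δ → ∃ L₀ : ℕ, ∀ (L : ℕ) [NeZero L], Even L → L₀ ≤ L →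
      C₁ - δ ≤ (∑ x : Torus d L, twoPoint (phi L) (f1 L) (f2 L) 0 x) / (L : ℝ) ^ d)
    (hbd : ∀ (L : ℕ) [NeZero L], Even L → ∀ x y : Torus d L, twoPoint (phi L) (f1 L) (f2 L) x y ≤ M) :
    ∀ φ : ℝ, 0 < φ → φ < C₁ / 2 →
      ∃ ε : ℝ, 0 < ε ∧ ∃ L₀ : ℕ, ∀ (L : ℕ) [NeZero L], Even L → L₀ ≤ L →
        ∀ (i : Fin d) (k : ℤ), Odd k → 0 < |k| → (|k| : ℝ) < ε * L →
          φ ≤ twoPoint (phi L) (f1 L) (f2 L) 0 (axis i (k : ZMod L)) := by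
  classical
  intro φ hφ0 hφ2
  have hC2φ : 0 < C₁ - 2 * φ := by linarith
  set δ : ℝ := (C₁ - 2 * φ) / 4 with hδdef
  have hδ0 : 0 < δ := by positivity
  obtain ⟨L₀, hL₀⟩ := hliminf δ hδ0
  set ε : ℝ := min ((C₁ - 2 * φ) / (16 * M)) (1 / 16) with hεdef
  have hε0 : 0 < ε := lt_min (by positivity) (by norm_num)
  refine ⟨ε, hε0, L₀, ?_⟩
  intro L _inst hLeven hLL i k hkodd hkpos hkeps
  have hLne : L ≠ 0 := NeZero.ne L
  have hLmod : L % 2 = 0 := Nat.even_iff.1 hLeven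
  have hL2 : 2 ≤ L := by omega
  have hLpos : (0 : ℝ) < (L : ℝ) := by positivity
  set n : ℕ := k.natAbs with hndef
  have hn1 : 1 ≤ n := by
    have : k ≠ 0 := by intro h; rw [h] at hkpos; simp at hkpos
    omega
  have hnodd : Odd n := Int.natAbs_odd.2 hkodd
  obtain ⟨lo, hlo⟩ := hnodd
  have hnr : (n : ℝ) < ε * L := by
    have : (|k| : ℝ) = (n : ℝ) := by
      rw [hndef]
      push_cast [Nat.cast_natAbs]
      norm_num
    linarith [hkeps, this.symm.le]
  have h16 : 16 * n < L := by
    have hε16 : ε ≤ 1 / 16 := min_le_right _ _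
    have h1 : (n : ℝ) < (1 / 16) * L := lt_of_lt_of_le hnr (by nlinarith)
    have h2 : (16 * n : ℝ) < L := by linarith
    exact_mod_cast h2
  have hrp : IsRP (AL L) (phi L) i (L - 1) :=
    hRP L hLeven i (L - 1) (by omega) (by omega)
  have hsymL : TorusSymmetric (phi L) (f1 L) (f2 L) := hsym L hLeven
  set g : Torus d L → ℝ := fun u => twoPoint (phi L) (f1 L) (f2 L) 0 u with hgdef
  set h : ℕ → ℝ := fun r => twoPoint (phi L) (f1 L) (f2 L) 0 (axis i ((r : ℕ) : ZMod L))
    with hhdef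
  set T : ℕ → ℝ := fun j => h (2 * j + 1) with hTdef
  -- symmetry of h
  have hsymh : ∀ m : ℕ, m ≤ L → h (L - m) = h m := by
    intro m hm
    have hcast : ((L - m : ℕ) : ZMod L) = -((m : ℕ) : ZMod L) := by
      rw [Nat.cast_sub hm, ZMod.natCast_self]
      ring
    show twoPoint _ _ _ 0 (axis i ((L - m : ℕ) : ZMod L)) = _
    rw [hcast, axis_neg, twoPoint_neg _ _ _ hsymL]
  -- convexity of T
  have hconv : ∀ j, j + 2 < L / 2 → T (j + 1) ≤ (T j + T (j + 2)) / 2 := by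
    intro j hj
    have hkey := key_ineq (phi L) (f1 L) (f2 L) i hLeven hL2 (AL L) (hF1 L) (hF2 L) hrp hsymL
      (axis i (-((j + (j + 2) + 1 : ℕ) : ZMod L))) j (j + 2) (by omega) hj (by simp [axis])
    have he1 : twoPoint (phi L) (f1 L) (f2 L) 0 (axis i (-((j + (j + 2) + 1 : ℕ) : ZMod L)))
        = T (j + 1) := by
      rw [axis_neg, twoPoint_neg _ _ _ hsymL]
      show _ = h (2 * (j + 1) + 1)
      have : j + (j + 2) + 1 = 2 * (j + 1) + 1 := by ring
      rw [this]
    rw [he1] at hkey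
    have he2 : 2 * (j + 2) + 1 = 2 * (j + 2) + 1 := rfl
    exact hkey
  -- symmetry of T
  have hsymT : ∀ j, j ≤ L / 2 - 1 → T j = T (L / 2 - 1 - j) := by
    intro j hj
    show h (2 * j + 1) = h (2 * (L / 2 - 1 - j) + 1)
    have he : 2 * (L / 2 - 1 - j) + 1 = L - (2 * j + 1) := by omega
    rw [he, hsymh (2 * j + 1) (by omega)]
  have hTmono := seq_mono (L / 2) T hconv hsymT
  have hTpos : ∀ j, j < L / 2 → 0 ≤ T j := by
    intro j hj
    exact pos_ineq (phi L) (f1 L) (f2 L) i hLeven hL2 (AL L) (hF1 L) (hF2 L) hrp hsymL j hj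
  -- pointwise bound
  have claim1 : ∀ u : Torus d L,
      g u ≤ if n ≤ (u i).val ∧ (u i).val ≤ L - n then h n else M := by
    intro u
    by_cases hv : n ≤ (u i).val ∧ (u i).val ≤ L - n
    · rw [if_pos hv]
      set v : ZMod L := u i with hvdef
      have hvalL : v.val < L := ZMod.val_lt v
      set s : ℕ := L - 1 - v.val with hsdef
      set j : ℕ := min ((L - n - 1) / 2) (s - lo) with hjdef
      set m : ℕ := s - j with hmdef
      have hfacts : j < L / 2 ∧ m < L / 2 ∧ j + m = s ∧ lo ≤ j ∧ lo ≤ m ∧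
          lo + j + 1 ≤ L / 2 ∧ lo + m + 1 ≤ L / 2 := by omega
      have hcastu : u i = -(((j + m + 1 : ℕ)) : ZMod L) := by
        have hjm : ((j + m + 1 : ℕ) : ZMod L) = -(u i) := by
          have hjm2 : j + m + 1 = L - v.val := by omega
          rw [hjm2, Nat.cast_sub (by omega), ZMod.natCast_self, zero_sub]
          have hvv : ((v.val : ℕ) : ZMod L) = v := by rw [ZMod.natCast_val v, ZMod.cast_id]
          rw [hvv, hvdef]
        rw [hjm, neg_neg]
      have hkey := key_ineq (phi L) (f1 L) (f2 L) i hLeven hL2 (AL L) (hF1 L) (hF2 L) hrp hsymL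
        u j m hfacts.1 hfacts.2.1 hcastu
      have hTj : T j ≤ T lo := hTmono lo j hfacts.2.2.2.1 hfacts.2.2.2.2.2.1
      have hTm : T m ≤ T lo := hTmono lo m hfacts.2.2.2.2.1 hfacts.2.2.2.2.2.2
      have hTlo : T lo = h n := by
        show h (2 * lo + 1) = h n
        rw [hlo]
      have : g u ≤ (T j + T m) / 2 := hkey
      rw [hTlo] at hTj hTm
      linarith
    · rw [if_neg hv]
      exact hbd L hLeven 0 u
  -- summing
  have hsum1 : ∑ u : Torus d L, g u ≤
      ∑ u : Torus d L, (if n ≤ (u i).val ∧ (u i).val ≤ L - n then h n else M) :=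
    Finset.sum_le_sum (fun u _ => claim1 u)
  set Bd : ZMod L → ℝ := fun v => if n ≤ v.val ∧ v.val ≤ L - n then h n else M with hBddef
  have hcardrest : (Fintype.card ({j : Fin d // j ≠ i} → ZMod L) : ℝ) = (L : ℝ) ^ (d - 1) := by
    rw [Fintype.card_fun, ZMod.card]
    have : Fintype.card {j : Fin d // j ≠ i} = d - 1 := by
      rw [Fintype.card_subtype_compl, Fintype.card_subtype_eq, Fintype.card_fin]
    rw [this]
    push_cast
    rfl
  have hsum2 : ∑ u : Torus d L, Bd (u i) = (L : ℝ) ^ (d - 1) * ∑ v : ZMod L, Bd v := by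
    have he : ∑ u : Torus d L, Bd (u i)
        = ∑ p : ZMod L × ({j : Fin d // j ≠ i} → ZMod L), Bd p.1 := by
      apply Fintype.sum_equiv (Equiv.piSplitAt i (fun _ => ZMod L))
      intro u
      rfl
    rw [he, Fintype.sum_prod_type]
    simp only [Finset.sum_const, Finset.card_univ, nsmul_eq_mul]
    rw [← Finset.mul_sum, hcardrest]
  have hn0 : 0 ≤ h n := by
    have := hTpos lo (by omega)
    rw [hTdef] at this
    simpa [← hlo] using this
  have hcardbad : ((Finset.univ.filter
      (fun v : ZMod L => ¬(n ≤ v.val ∧ v.val ≤ L - n))).card : ℝ) ≤ 2 * n := by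
    have hsub : (Finset.univ.filter
        (fun v : ZMod L => ¬(n ≤ v.val ∧ v.val ≤ L - n))).card ≤
        (Finset.range n ∪ Finset.Ico (L - n + 1) L).card := by
      apply Finset.card_le_card_of_injOn ZMod.val
      · intro v hv
        simp only [Finset.coe_filter, Finset.mem_univ, true_and, Set.mem_setOf_eq] at hv
        have hvalL : v.val < L := ZMod.val_lt v
        simp only [Finset.mem_coe, Finset.mem_union, Finset.mem_range, Finset.mem_Ico]
        omega
      · intro a _ b _ hab
        exact ZMod.val_injective L hab
    have hcu : (Finset.range n ∪ Finset.Ico (L - n + 1) L).card ≤ 2 * n := by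
      calc (Finset.range n ∪ Finset.Ico (L - n + 1) L).card
          ≤ (Finset.range n).card + (Finset.Ico (L - n + 1) L).card :=
            Finset.card_union_le _ _
        _ ≤ 2 * n := by rw [Finset.card_range, Nat.card_Ico]; omega
    have : (Finset.univ.filter
        (fun v : ZMod L => ¬(n ≤ v.val ∧ v.val ≤ L - n))).card ≤ 2 * n := le_trans hsub hcu
    exact_mod_cast this
  have hsum3 : ∑ v : ZMod L, Bd v ≤ (L : ℝ) * h n + 2 * n * M := by
    have hle : ∀ v : ZMod L, Bd v ≤ h n +
        (if n ≤ v.val ∧ v.val ≤ L - n then 0 else M) := by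
      intro v
      by_cases hv : n ≤ v.val ∧ v.val ≤ L - n
      · simp [hBddef, hv]
      · simp only [hBddef, if_neg hv]
        linarith
    calc ∑ v : ZMod L, Bd v ≤ ∑ v : ZMod L, (h n +
          (if n ≤ v.val ∧ v.val ≤ L - n then 0 else M)) :=
          Finset.sum_le_sum (fun v _ => hle v)
      _ = (L : ℝ) * h n + ∑ v : ZMod L,
          (if n ≤ v.val ∧ v.val ≤ L - n then (0:ℝ) else M) := by
          rw [Finset.sum_add_distrib, Finset.sum_const, Finset.card_univ, ZMod.card,
            nsmul_eq_mul]
      _ ≤ (L : ℝ) * h n + 2 * n * M := by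
          have : ∑ v : ZMod L, (if n ≤ v.val ∧ v.val ≤ L - n then (0:ℝ) else M)
              = ((Finset.univ.filter
                (fun v : ZMod L => ¬(n ≤ v.val ∧ v.val ≤ L - n))).card : ℝ) * M := by
            rw [Finset.sum_ite, Finset.sum_const_zero, Finset.sum_const, zero_add,
              nsmul_eq_mul]
          rw [this]
          have := hcardbad
          nlinarith [hM.le]
  -- put it together
  have havg := hL₀ L hLeven hLL
  have hpowpos : (0 : ℝ) < (L : ℝ) ^ (d - 1) := by positivity
  have hpowd : (L : ℝ) ^ d = (L : ℝ) ^ (d - 1) * L := by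
    rw [← pow_succ]
    congr 1
    omega
  have htotal : ∑ x : Torus d L, twoPoint (phi L) (f1 L) (f2 L) 0 x ≤
      (L : ℝ) ^ (d - 1) * ((L : ℝ) * h n + 2 * n * M) := by
    calc ∑ x : Torus d L, twoPoint (phi L) (f1 L) (f2 L) 0 x
        = ∑ u : Torus d L, g u := rfl
      _ ≤ ∑ u : Torus d L, Bd (u i) := hsum1
      _ = (L : ℝ) ^ (d - 1) * ∑ v : ZMod L, Bd v := hsum2
      _ ≤ (L : ℝ) ^ (d - 1) * ((L : ℝ) * h n + 2 * n * M) := by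
          apply mul_le_mul_of_nonneg_left hsum3 hpowpos.le
  have hLne0 : (L : ℝ) ≠ 0 := ne_of_gt hLpos
  have hfinal : C₁ - δ ≤ h n + 2 * n * M / L := by
    have h2 : (∑ x : Torus d L, twoPoint (phi L) (f1 L) (f2 L) 0 x) / (L : ℝ) ^ d ≤
        ((L : ℝ) ^ (d - 1) * ((L : ℝ) * h n + 2 * n * M)) / (L : ℝ) ^ d :=
      (div_le_div_iff_of_pos_right (by positivity)).2 htotal
    have h3 : ((L : ℝ) ^ (d - 1) * ((L : ℝ) * h n + 2 * n * M)) / (L : ℝ) ^ d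
        = h n + 2 * n * M / L := by
      rw [hpowd]
      field_simp
    rw [h3] at h2
    linarith
  have hεM : ε * M ≤ (C₁ - 2 * φ) / 16 := by
    have hεle : ε ≤ (C₁ - 2 * φ) / (16 * M) := min_le_left _ _
    have := mul_le_mul_of_nonneg_right hεle hM.le
    calc ε * M ≤ (C₁ - 2 * φ) / (16 * M) * M := this
      _ = (C₁ - 2 * φ) / 16 := by field_simp
  have hX : 2 * (n : ℝ) * M / L ≤ (C₁ - 2 * φ) / 8 := by
    rw [div_le_iff₀ hLpos]
    have a1 : (n : ℝ) * M ≤ (ε * L) * M := mul_le_mul_of_nonneg_right hnr.le hM.le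
    have a3 : (ε * M) * L ≤ ((C₁ - 2 * φ) / 16) * L := mul_le_mul_of_nonneg_right hεM hLpos.le
    nlinarith
  have hhn : φ ≤ h n := by
    rw [hδdef] at hfinal
    linarith
  have hgoal : twoPoint (phi L) (f1 L) (f2 L) 0 (axis i ((k : ℤ) : ZMod L)) = h n := by
    rcases Int.natAbs_eq k with hk | hk
    · have hc : ((k : ℤ) : ZMod L) = ((n : ℕ) : ZMod L) := by
        rw [hk, hndef]
        exact Int.cast_natCast _
      rw [hc]
    · have hc : ((k : ℤ) : ZMod L) = -((n : ℕ) : ZMod L) := by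
        rw [hk, hndef, Int.cast_neg, Int.cast_natCast]
      rw [hc, axis_neg, twoPoint_neg _ _ _ hsymL]
  rw [hgoal]
  exact hhn

end RPPaper
end

section
/- Suppose that for every even L the linear functional ⟨·⟩ is reflection positive for reflections through edges and the two-point function G_L is torus symmetric, that there are constants C₁ > 0 and M ∈ (0,∞) such that liminf over even L → ∞ of (1/|T_L|) Σ_{x∈T_L} G_L(o,x) ≥ C₁, and G_L(x,y) ≤ M for all even L and all x, y ∈ T_L. Then for any ε ∈ (0, 1/2) and any C < C₁, for all sufficiently large even L the following holds: for every x ∈ T_L such that for every i ∈ {1,…,d} the coordinate |x·e_i| is odd and lies in (0, εL), one has G_L(o, x) ≥ M − (1/4 − ε/2)^{−d} (M − C). -/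
namespace RPPaper

section Aux
variable {d L : ℕ} [NeZero L]

lemma reflect_apply_self (i : Fin d) (t : ℕ) (x : Torus d L) :
    reflect i t x i = (t : ZMod L) - x i := by simp [reflect]

lemma reflect_apply_ne (i j : Fin d) (t : ℕ) (x : Torus d L) (h : j ≠ i) :
    reflect i t x j = x j := by simp [reflect, Function.update, h]

lemma reflect_involutive (i : Fin d) (t : ℕ) :
    Function.Involutive (reflect (d := d) (L := L) i t) := by
  intro x; funext j
  by_cases h : j = i
  · subst h; simp [reflect]
  · simp [reflect, Function.update, h]

lemma reflect_injective (i : Fin d) (t : ℕ) :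
    Function.Injective (reflect (d := d) (L := L) i t) :=
  (reflect_involutive i t).injective

lemma mem_posHalf_one (i : Fin d) (z : Torus d L) :
    z ∈ posHalf d L i 1 ↔ (z i - 1).val < L / 2 := by
  simp [posHalf]

lemma two_le_of_even (hL : Even L) : 2 ≤ L := by
  have h0 := NeZero.pos L
  rcases hL with ⟨k, rfl⟩; omega

lemma reflect_one_mem_posHalf_iff (hL : Even L) (i : Fin d) (z : Torus d L) :
    reflect i 1 z ∈ posHalf d L i 1 ↔ z ∉ posHalf d L i 1 := by
  have hL2 : 2 ≤ L := two_le_of_even hL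
  haveI : Fact (1 < L) := ⟨hL2⟩
  have hdvd : L / 2 * 2 = L := Nat.div_mul_cancel hL.two_dvd
  rw [mem_posHalf_one, mem_posHalf_one, reflect_apply_self]
  have h1 : ((1:ℕ) : ZMod L) - z i - 1 = -(z i) := by push_cast; ring
  rw [h1]
  have hγ : (z i).val < L := ZMod.val_lt (z i)
  have hvone : (1 : ZMod L).val = 1 := ZMod.val_one L
  have hvneg1 : (-1 : ZMod L).val = L - 1 := by
    rw [ZMod.neg_val]
    simp [hvone, one_ne_zero]
  by_cases h0 : z i = 0
  · rw [h0]
    have : ((0 : ZMod L) - 1) = -1 := by ring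
    rw [this, hvneg1]
    simp
    omega
  · have hneg : (-(z i)).val = L - (z i).val := by rw [ZMod.neg_val]; simp [h0]
    have hγ1 : 1 ≤ (z i).val := by
      rcases Nat.eq_zero_or_pos (z i).val with h | h
      · exact absurd ((ZMod.val_eq_zero _).1 h) h0
      · omega
    have hsub : (z i - 1).val = (z i).val - 1 := by
      have : z i - 1 = z i + (-1) := by ring
      rw [this, ZMod.val_add, hvneg1]
      have : ((z i).val + (L - 1)) = ((z i).val - 1) + L := by omega
      rw [this, Nat.add_mod_right, Nat.mod_eq_of_lt (by omega)]
    rw [hneg, hsub]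
    omega

lemma posHalf_card (hL : Even L) (i : Fin d) :
    2 * (posHalf d L i 1).card = L ^ d := by
  classical
  have hcover : (Finset.univ : Finset (Torus d L)) =
      posHalf d L i 1 ∪ (posHalf d L i 1).image (reflect i 1) := by
    apply Finset.ext
    intro z
    simp only [Finset.mem_univ, true_iff, Finset.mem_union, Finset.mem_image]
    by_cases hz : z ∈ posHalf d L i 1
    · exact Or.inl hz
    · refine Or.inr ⟨reflect i 1 z, ?_, (reflect_involutive i 1) z⟩
      exact (reflect_one_mem_posHalf_iff hL i z).2 hz
  have hdisj : Disjoint (posHalf d L i 1) ((posHalf d L i 1).image (reflect i 1)) := by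
    rw [Finset.disjoint_right]
    intro z hzim hz
    rcases Finset.mem_image.1 hzim with ⟨w, hw, rfl⟩
    exact ((reflect_one_mem_posHalf_iff hL i w).1 hz) hw
  have hcard := congrArg Finset.card hcover
  rw [Finset.card_union_of_disjoint hdisj,
      Finset.card_image_of_injective _ (reflect_injective i 1)] at hcard
  have huniv : (Finset.univ : Finset (Torus d L)).card = L ^ d := by
    rw [Finset.card_univ]
    rw [Fintype.card_fun]
    simp [ZMod.card]
  omega

end Aux

section Alg
variable {d L : ℕ} [NeZero L] {Sig : Type*}

/-- `A_w = F²_w ∏_{u ∈ P \ {w}} F¹_u`. -/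
noncomputable def siteProd (f1 f2 : Sig → ℝ) (P : Finset (Torus d L)) (w : Torus d L) :
    MState d L Sig → ℝ :=
  fun ω => f2 (ω w) * ∏ u ∈ P.erase w, f1 (ω u)

lemma siteProd_mem (AL : Subalgebra ℝ (MState d L Sig → ℝ)) (f1 f2 : Sig → ℝ)
    (hF1 : ∀ u : Torus d L, site f1 u ∈ AL) (hF2 : ∀ u : Torus d L, site f2 u ∈ AL)
    (P : Finset (Torus d L)) (w : Torus d L) : siteProd f1 f2 P w ∈ AL := by
  have h : siteProd f1 f2 P w = site f2 w * ∏ u ∈ P.erase w, site f1 u := by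
    funext ω
    simp [siteProd, site, Finset.prod_apply]
  rw [h]
  exact mul_mem (hF2 w) (prod_mem (fun u _ => hF1 u))

lemma siteProd_hasDomain (f1 f2 : Sig → ℝ) (P : Finset (Torus d L)) {w : Torus d L}
    (hw : w ∈ P) : HasDomain (siteProd f1 f2 P w) ↑P := by
  intro ω₁ ω₂ h
  unfold siteProd
  rw [h w hw]
  congr 1
  exact Finset.prod_congr rfl fun u hu => by rw [h u (Finset.mem_of_mem_erase hu)]

lemma siteProd_mul_reflect (hEven : Even L) (i : Fin d) (f1 f2 : Sig → ℝ)
    {w w' : Torus d L} (hw : w ∈ posHalf d L i 1) (hw' : w' ∈ posHalf d L i 1) :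
    siteProd f1 f2 (posHalf d L i 1) w *
      reflectFun i 1 (siteProd f1 f2 (posHalf d L i 1) w')
    = fun ω => f2 (ω w) * f2 (ω (reflect i 1 w')) *
        ∏ z ∈ (Finset.univ.erase w).erase (reflect i 1 w'), f1 (ω z) := by
  classical
  funext ω
  set P := posHalf d L i 1 with hP
  set θ := reflect (d := d) (L := L) i 1 with hθ
  have hθinj : Function.Injective θ := reflect_injective i 1
  have hmemiff : ∀ z : Torus d L, θ z ∈ P ↔ z ∉ P := fun z =>
    reflect_one_mem_posHalf_iff hEven i z
  have hdisjPim : ∀ z : Torus d L, z ∈ P.image θ → z ∉ P := by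
    intro z hzim hz
    rcases Finset.mem_image.1 hzim with ⟨v, hv, rfl⟩
    exact ((hmemiff v).1 hz) hv
  have hcover : ∀ z : Torus d L, z ∈ P ∨ z ∈ P.image θ := by
    intro z
    by_cases hz : z ∈ P
    · exact Or.inl hz
    · exact Or.inr (Finset.mem_image.2 ⟨θ z, (hmemiff z).2 hz,
        (reflect_involutive i 1) z⟩)
  have hθw' : θ w' ∉ P := fun hc => ((hmemiff w').1 hc) hw'
  have h2 : (∏ u ∈ P.erase w', f1 (ω (θ u))) =
      ∏ v ∈ (P.image θ).erase (θ w'), f1 (ω v) := by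
    rw [← Finset.image_erase hθinj, Finset.prod_image (fun a _ b _ h => hθinj h)]
  have hdisj : Disjoint (P.erase w) ((P.image θ).erase (θ w')) := by
    rw [Finset.disjoint_left]
    intro z hz hz'
    exact hdisjPim z (Finset.mem_of_mem_erase hz') (Finset.mem_of_mem_erase hz)
  have hunion : (P.erase w) ∪ ((P.image θ).erase (θ w'))
      = (Finset.univ.erase w).erase (θ w') := by
    apply Finset.ext
    intro v
    simp only [Finset.mem_union, Finset.mem_erase, Finset.mem_univ, and_true]
    constructor
    · rintro (⟨hvw, hvP⟩ | ⟨hvθ, hvim⟩)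
      · exact ⟨fun hc => hθw' (hc ▸ hvP), hvw⟩
      · exact ⟨hvθ, fun hc => hdisjPim v hvim (hc ▸ hw)⟩
    · rintro ⟨hvθ, hvw⟩
      rcases hcover v with hv | hv
      · exact Or.inl ⟨hvw, hv⟩
      · exact Or.inr ⟨hvθ, hv⟩
  have hprod : (∏ u ∈ P.erase w, f1 (ω u)) * ∏ v ∈ (P.image θ).erase (θ w'), f1 (ω v)
      = ∏ z ∈ (Finset.univ.erase w).erase (θ w'), f1 (ω z) := by
    rw [← Finset.prod_union hdisj, hunion]
  show siteProd f1 f2 P w ω * (siteProd f1 f2 P w' fun u => ω (θ u)) = _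
  unfold siteProd
  rw [← hprod, ← h2]
  ring

end Alg

section TI
variable {d L : ℕ} [NeZero L] {Sig : Type*}

lemma twoPoint_translate_s6 (phi : (MState d L Sig → ℝ) →ₗ[ℝ] ℝ) (f1 f2 : Sig → ℝ)
    (hsym : TorusSymmetric phi f1 f2) {a b : Torus d L} (hab : a ≠ b) :
    twoPoint phi f1 f2 a b = twoPoint phi f1 f2 0 (b - a) := by
  classical
  have hinj : Function.Injective (fun x : Torus d L => x + -a) := by
    intro u v h
    simpa using congrArg (· + a) h
  have key := hsym ((Finset.univ.erase a).erase b) {a, b} (-a)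
  have hL : twoPoint phi f1 f2 a b =
      phi (fun w => (∏ x ∈ (Finset.univ.erase a).erase b, f1 (w x)) *
        ∏ x ∈ ({a, b} : Finset (Torus d L)), f2 (w x)) := by
    unfold twoPoint
    congr 1
    funext w
    rw [Finset.prod_pair hab]
    ring
  have hba : (0 : Torus d L) ≠ b - a := fun hc => hab (sub_eq_zero.1 hc.symm).symm
  have hR : twoPoint phi f1 f2 0 (b - a) =
      phi (fun w => (∏ x ∈ (Finset.univ.erase a).erase b, f1 (w (x + -a))) *
        ∏ x ∈ ({a, b} : Finset (Torus d L)), f2 (w (x + -a))) := by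
    unfold twoPoint
    congr 1
    funext w
    have h2 : (∏ x ∈ ({a, b} : Finset (Torus d L)), f2 (w (x + -a)))
        = f2 (w 0) * f2 (w (b - a)) := by
      rw [Finset.prod_pair hab]
      simp [sub_eq_add_neg]
    have h1 : (∏ x ∈ (Finset.univ.erase a).erase b, f1 (w (x + -a)))
        = ∏ z ∈ (Finset.univ.erase 0).erase (b - a), f1 (w z) := by
      rw [← Finset.prod_image (g := fun x : Torus d L => x + -a)
        (f := fun z => f1 (w z)) (fun x _ y _ h => hinj h)]
      congr 1
      rw [Finset.image_erase hinj, Finset.image_erase hinj]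
      have himuniv : Finset.univ.image (fun x : Torus d L => x + -a) = Finset.univ :=
        Finset.image_univ_of_surjective (fun v => ⟨v + a, by simp⟩)
      rw [himuniv]
      congr 1
      · simp
      · rw [sub_eq_add_neg]
    rw [h1, h2]
    have h0b : (0 : Torus d L) ≠ b - a := hba
    rw [Finset.erase_right_comm]
    ring
  rw [hL, key, ← hR]

end TI

lemma exp_sum {α : Type*} [DecidableEq α] (P : Finset α) {z0 z1 : α}
    (h0 : z0 ∈ P) (h1 : z1 ∈ P) (N : ℝ) (F : α → ℝ) :
    ∑ w ∈ P, ((N * (if w = z0 then 1 else 0) + N * (if w = z1 then 1 else 0) - 2) * F w)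
      = N * F z0 + N * F z1 - 2 * ∑ w ∈ P, F w := by
  have h : ∀ w ∈ P,
      (N * (if w = z0 then 1 else 0) + N * (if w = z1 then 1 else 0) - 2) * F w
      = ((if w = z0 then N * F w else 0) + (if w = z1 then N * F w else 0)) - 2 * F w := by
    intro w _; split_ifs <;> ring
  rw [Finset.sum_congr rfl h, Finset.sum_sub_distrib, Finset.sum_add_distrib,
    Finset.sum_ite_eq', Finset.sum_ite_eq', if_pos h0, if_pos h1, Finset.mul_sum]

set_option maxHeartbeats 1600000 in
/-- If the Cesàro sums of the two-point functions are uniformly bounded below by `C₁ > 0` and the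
two-point functions are uniformly bounded above by `M`, then for `ε ∈ (0,1/2)`, `C < C₁` and all
large even `L`, at every point `x` whose coordinates are all odd and in `(0, εL)` one has
`G_L(o,x) ≥ M − (1/4 − ε/2)^{-d} (M − C)`. -/
theorem statement6 (d : ℕ) (hd : 2 ≤ d) (Sig : ℕ → Type*)
    (AL : ∀ L : ℕ, Subalgebra ℝ (MState d L (Sig L) → ℝ))
    (hfin : ∀ L : ℕ, FiniteDimensional ℝ (AL L))
    (phi : ∀ L : ℕ, (MState d L (Sig L) → ℝ) →ₗ[ℝ] ℝ)
    (hone : ∀ L : ℕ, phi L 1 = 1)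
    (f1 f2 : ∀ L : ℕ, Sig L → ℝ)
    (hF1 : ∀ (L : ℕ) (x : Torus d L), site (f1 L) x ∈ AL L)
    (hF2 : ∀ (L : ℕ) (x : Torus d L), site (f2 L) x ∈ AL L)
    (hRP : ∀ (L : ℕ) [NeZero L], Even L → RPEdges (AL L) (phi L))
    (hsym : ∀ (L : ℕ) [NeZero L], Even L → TorusSymmetric (phi L) (f1 L) (f2 L))
    (C₁ : ℝ) (hC₁ : 0 < C₁) (M : ℝ) (hM : 0 < M)
    (hliminf : ∀ δ : ℝ, 0 < δ → ∃ L₀ : ℕ, ∀ (L : ℕ) [NeZero L], Even L → L₀ ≤ L →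
      C₁ - δ ≤ (∑ x : Torus d L, twoPoint (phi L) (f1 L) (f2 L) 0 x) / (L : ℝ) ^ d)
    (hbd : ∀ (L : ℕ) [NeZero L], Even L → ∀ x y : Torus d L, twoPoint (phi L) (f1 L) (f2 L) x y ≤ M) :
    ∀ ε : ℝ, 0 < ε → ε < 1 / 2 → ∀ C : ℝ, C < C₁ →
      ∃ L₀ : ℕ, ∀ (L : ℕ) [NeZero L], Even L → L₀ ≤ L →
        ∀ x : Torus d L,
          (∀ i : Fin d, Odd (coordRep L (x i)) ∧ 0 < |coordRep L (x i)| ∧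
            (|coordRep L (x i)| : ℝ) < ε * L) →
          M - (M - C) / (1 / 4 - ε / 2) ^ d ≤ twoPoint (phi L) (f1 L) (f2 L) 0 x := by
  classical
  intro ε hε hε2 C hC
  obtain ⟨L₀, hL₀⟩ := hliminf (C₁ - C) (by linarith)
  refine ⟨L₀, ?_⟩
  intro L hNZ hEven hLL x hx
  have hL2 : 2 ≤ L := two_le_of_even hEven
  haveI : Fact (1 < L) := ⟨hL2⟩
  have hdvd : L / 2 * 2 = L := Nat.div_mul_cancel hEven.two_dvd
  have hd0 : 0 < d := by omega
  have hd1 : 1 < d := by omega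
  set i0 : Fin d := ⟨0, hd0⟩ with hi0def
  set i1 : Fin d := ⟨1, hd1⟩ with hi1def
  have hi01 : i1 ≠ i0 := by simp [hi0def, hi1def, Fin.ext_iff]
  -- all coordinates of x are nonzero
  have hcoordne : ∀ i : Fin d, x i ≠ 0 := by
    intro i hzero
    have h := (hx i).2.1
    have hc0 : coordRep L (x i) = 0 := by
      rw [hzero]
      unfold coordRep
      rw [if_pos] <;> simp [ZMod.val_zero]
      positivity
    rw [hc0] at h
    simp at h
  -- basic objects
  set P := posHalf d L i0 1 with hPdef
  set θ := reflect (d := d) (L := L) i0 1 with hθdef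
  have hθinv : ∀ z : Torus d L, θ (θ z) = z := reflect_involutive i0 1
  have hθinj : Function.Injective θ := reflect_injective i0 1
  have hmemiff : ∀ z : Torus d L, θ z ∈ P ↔ z ∉ P := fun z =>
    reflect_one_mem_posHalf_iff hEven i0 z
  set N := P.card with hNdef
  have hcardN : 2 * N = L ^ d := posHalf_card hEven i0
  have huniv_card : (Finset.univ : Finset (Torus d L)).card = L ^ d := by
    rw [Finset.card_univ, Fintype.card_fun]
    simp [ZMod.card]
  -- the geometric points z0, z1
  set q := (x i0).val with hqdef
  have hq1 : 1 ≤ q := by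
    rcases Nat.eq_zero_or_pos q with h | h
    · exact absurd ((ZMod.val_eq_zero _).1 h) (hcoordne i0)
    · omega
  have hqL : q < L := ZMod.val_lt _
  obtain ⟨α, hαlt, hαval2⟩ : ∃ α : ℕ, α < L / 2 ∧ L / 2 ≤ (q + α) % L := by
    by_cases h : q ≤ L / 2
    · exact ⟨L / 2 - 1, by omega, by rw [Nat.mod_eq_of_lt (by omega)]; omega⟩
    · exact ⟨0, by omega, by rw [Nat.mod_eq_of_lt (by omega)]; omega⟩
  set z0 : Torus d L := axis i0 ((1 : ZMod L) + (α : ℕ)) with hz0def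
  have hz0i0 : z0 i0 = 1 + (α : ZMod L) := by simp [hz0def, axis]
  have hz0i1 : z0 i1 = 0 := by simp [hz0def, axis, hi01]
  have hαval : ((α : ℕ) : ZMod L).val = α := ZMod.val_cast_of_lt (by omega)
  have hz0P : z0 ∈ P := by
    rw [hPdef, mem_posHalf_one]
    have h : z0 i0 - 1 = ((α : ℕ) : ZMod L) := by rw [hz0i0]; ring
    rw [h, hαval]; omega
  set z1 : Torus d L := θ (x + z0) with hz1def
  have hθz1 : θ z1 = x + z0 := by rw [hz1def]; exact hθinv _
  have hxz0val : ((x + z0) i0 - 1).val = (q + α) % L := by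
    have h : (x + z0) i0 - 1 = x i0 + ((α : ℕ) : ZMod L) := by
      have : (x + z0) i0 = x i0 + z0 i0 := rfl
      rw [this, hz0i0]; ring
    rw [h, ZMod.val_add, hαval]
  have hz1P : z1 ∈ P := by
    rw [hz1def]
    refine (hmemiff _).2 ?_
    rw [hPdef, mem_posHalf_one, hxz0val]
    omega
  have hxi1 : (x + z0) i1 = x i1 := by
    have : (x + z0) i1 = x i1 + z0 i1 := rfl
    rw [this, hz0i1, add_zero]
  have hz0nez1 : z0 ≠ z1 := by
    intro hc
    have h1 : z1 i1 = (x + z0) i1 := by rw [hz1def]; exact reflect_apply_ne _ _ _ _ hi01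
    have h2 : z0 i1 = x i1 := by rw [hc, h1, hxi1]
    rw [hz0i1] at h2
    exact hcoordne i1 h2.symm
  have hz0neθz1 : z0 ≠ θ z1 := by
    rw [hθz1]
    intro hc
    have h2 := congrFun hc i1
    rw [hz0i1, hxi1] at h2
    exact hcoordne i1 h2.symm
  have hθz1subz0 : θ z1 - z0 = x := by rw [hθz1]; exact add_sub_cancel_right x z0
  -- two point function abbreviations
  set G2 : Torus d L → Torus d L → ℝ := fun a b => twoPoint (phi L) (f1 L) (f2 L) a b
    with hG2def
  have hbdL : ∀ a b : Torus d L, G2 a b ≤ M := hbd L hEven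
  have hTI : ∀ a b : Torus d L, a ≠ b → G2 a b = G2 0 (b - a) := fun a b hab =>
    twoPoint_translate_s6 _ _ _ (hsym L hEven) hab
  -- the Gram vector
  set S : Torus d L → (MState d L (Sig L) → ℝ) := fun w => siteProd (f1 L) (f2 L) P w
    with hSdef
  set c : Torus d L → ℝ := fun w =>
    (N : ℝ) * (if w = z0 then 1 else 0) + (N : ℝ) * (if w = z1 then 1 else 0) - 2 with hcdef
  set A : MState d L (Sig L) → ℝ := ∑ w ∈ P, c w • S w with hAdef
  have hAmem : A ∈ AL L := by
    rw [hAdef]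
    exact sum_mem fun w _ => Subalgebra.smul_mem _
      (siteProd_mem (AL L) _ _ (hF1 L) (hF2 L) P w) _
  have hAdom : HasDomain A ↑P := by
    intro ω₁ ω₂ h
    rw [hAdef]
    rw [Finset.sum_apply, Finset.sum_apply]
    refine Finset.sum_congr rfl fun w hw => ?_
    rw [Pi.smul_apply, Pi.smul_apply]
    congr 1
    exact siteProd_hasDomain _ _ P hw ω₁ ω₂ h
  have hRPL : IsRP (AL L) (phi L) i0 1 := hRP L hEven i0 1 (by omega) (by norm_num)
  have hGram : 0 ≤ phi L (A * reflectFun i0 1 A) := (hRPL A A hAmem hAmem hAdom hAdom).2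
  -- expansion of the Gram quantity
  have hprod : A * reflectFun i0 1 A
      = ∑ w ∈ P, ∑ w' ∈ P, (c w * c w') • (S w * reflectFun i0 1 (S w')) := by
    funext ω
    rw [Pi.mul_apply]
    have hA : A ω = ∑ w ∈ P, c w * S w ω := by
      rw [hAdef, Finset.sum_apply]
      simp
    have hθA : reflectFun i0 1 A ω = ∑ w' ∈ P, c w' * (reflectFun i0 1 (S w')) ω := by
      show A (fun u => ω (θ u)) = _
      rw [hAdef, Finset.sum_apply]
      simp [reflectFun]
      rfl
    rw [hA, hθA, Finset.sum_mul_sum, Finset.sum_apply]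
    refine Finset.sum_congr rfl fun w _ => ?_
    rw [Finset.sum_apply]
    refine Finset.sum_congr rfl fun w' _ => ?_
    rw [Pi.smul_apply, Pi.mul_apply, smul_eq_mul]
    ring
  have hphiAA : phi L (A * reflectFun i0 1 A)
      = ∑ w ∈ P, ∑ w' ∈ P, (c w * c w') * G2 w (θ w') := by
    rw [hprod, map_sum]
    refine Finset.sum_congr rfl fun w hw => ?_
    rw [map_sum]
    refine Finset.sum_congr rfl fun w' hw' => ?_
    rw [map_smul, smul_eq_mul]
    congr 1
    rw [hSdef]
    rw [siteProd_mul_reflect hEven i0 _ _ hw hw']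
    rfl
  -- global sums
  set T : ℝ := (L : ℝ) ^ d with hTdef
  have hTpos : 0 < T := by rw [hTdef]; positivity
  have hT2N : 2 * (N : ℝ) = T := by
    rw [hTdef]
    have h : ((2 * N : ℕ) : ℝ) = ((L ^ d : ℕ) : ℝ) := by rw [hcardN]
    push_cast at h
    linarith
  have hNpos : 0 < (N : ℝ) := by linarith [hTpos, hT2N]
  have hsumG : C * T ≤ ∑ u : Torus d L, G2 0 u := by
    have h := hL₀ L hEven hLL
    have h2 : C ≤ (∑ u : Torus d L, G2 0 u) / T := by
      rw [hG2def, hTdef]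
      calc C = C₁ - (C₁ - C) := by ring
        _ ≤ _ := h
    calc C * T ≤ ((∑ u : Torus d L, G2 0 u) / T) * T := by
          exact mul_le_mul_of_nonneg_right h2 (le_of_lt hTpos)
      _ = ∑ u : Torus d L, G2 0 u := by field_simp
  have hsumGup : ∑ u : Torus d L, G2 0 u ≤ T * M := by
    have h := Finset.sum_le_card_nsmul Finset.univ (fun v => G2 0 v) M (fun v _ => hbdL 0 v)
    rw [nsmul_eq_mul, huniv_card] at h
    calc ∑ u : Torus d L, G2 0 u ≤ ((L^d : ℕ) : ℝ) * M := h
      _ = T * M := by rw [hTdef]; push_cast; ring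
  have hMC : 0 ≤ M - C := by nlinarith
  -- lower bound for image sums
  have himage : ∀ F : Torus d L → Torus d L, Function.Injective F →
      (N : ℝ) * M - T * (M - C) ≤ ∑ w ∈ P, G2 0 (F w) := by
    intro F hF
    have h1 : ∑ w ∈ P, G2 0 (F w) = ∑ v ∈ P.image F, G2 0 v :=
      (Finset.sum_image (fun a _ b _ h => hF h)).symm
    have hsub : P.image F ⊆ Finset.univ := Finset.subset_univ _
    have hcardim : (P.image F).card = N := by
      rw [Finset.card_image_of_injective _ hF]
    have hsplit : ∑ v ∈ P.image F, G2 0 v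
        = (∑ v : Torus d L, G2 0 v) - ∑ v ∈ Finset.univ \ P.image F, G2 0 v := by
      rw [Finset.sum_sdiff_eq_sub hsub]
      ring
    have hcomp : ∑ v ∈ Finset.univ \ P.image F, G2 0 v ≤ ((L ^ d - N : ℕ) : ℝ) * M := by
      have h := Finset.sum_le_card_nsmul (Finset.univ \ P.image F) (fun v => G2 0 v) M
        (fun v _ => hbdL 0 v)
      rw [nsmul_eq_mul] at h
      have hcd : (Finset.univ \ P.image F).card = L ^ d - N := by
        rw [Finset.card_sdiff_of_subset hsub, huniv_card, hcardim]
      rw [hcd] at h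
      exact h
    have hNle : N ≤ L ^ d := by omega
    have hcast : ((L ^ d - N : ℕ) : ℝ) = T - (N : ℝ) := by
      rw [Nat.cast_sub hNle, hTdef]
      push_cast
      ring
    rw [h1, hsplit]
    rw [hcast] at hcomp
    linarith [hsumG, hcomp]
  -- the four row/column sums
  have hθnotP : ∀ w' : Torus d L, w' ∈ P → θ w' ∉ P := fun w' hw' hc =>
    ((hmemiff w').1 hc) hw'
  have hrow : ∀ w0 : Torus d L, w0 ∈ P →
      (N : ℝ) * M - T * (M - C) ≤ ∑ w' ∈ P, G2 w0 (θ w') := by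
    intro w0 hw0
    have hF : Function.Injective (fun w' : Torus d L => θ w' - w0) := by
      intro a b h
      have h' : θ a - w0 = θ b - w0 := h
      exact hθinj (by rwa [sub_left_inj] at h')
    have hcongr : ∑ w' ∈ P, G2 w0 (θ w') = ∑ w' ∈ P, G2 0 (θ w' - w0) := by
      refine Finset.sum_congr rfl fun w' hw' => ?_
      exact hTI w0 (θ w') (fun hc => hθnotP w' hw' (hc ▸ hw0))
    rw [hcongr]
    exact himage _ hF
  have hcol : ∀ w0 : Torus d L, w0 ∈ P →
      (N : ℝ) * M - T * (M - C) ≤ ∑ w ∈ P, G2 w (θ w0) := by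
    intro w0 hw0
    have hF : Function.Injective (fun w : Torus d L => θ w0 - w) := by
      intro a b h
      have h' : θ w0 - a = θ w0 - b := h
      have h2 : θ w0 - a - (θ w0 - b) = 0 := by rw [h']; ring
      have h3 : b - a = 0 := by rw [← h2]; ring
      have := sub_eq_zero.1 h3
      exact this.symm
    have hcongr : ∑ w ∈ P, G2 w (θ w0) = ∑ w ∈ P, G2 0 (θ w0 - w) := by
      refine Finset.sum_congr rfl fun w hw => ?_
      exact hTI w (θ w0) (fun hc => hθnotP w0 hw0 (hc.symm ▸ hw))
    rw [hcongr]
    exact himage _ hF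
  have hSS : ∑ w ∈ P, ∑ w' ∈ P, G2 w (θ w') ≤ (N : ℝ) * ((N : ℝ) * M) := by
    have h : ∀ w ∈ P, ∑ w' ∈ P, G2 w (θ w') ≤ (N : ℝ) * M := by
      intro w _
      have h := Finset.sum_le_card_nsmul P (fun w' => G2 w (θ w')) M
        (fun w' _ => hbdL w (θ w'))
      rw [nsmul_eq_mul] at h
      exact h
    have h2 := Finset.sum_le_card_nsmul P (fun w => ∑ w' ∈ P, G2 w (θ w')) ((N : ℝ) * M)
      h
    rw [nsmul_eq_mul] at h2
    exact h2
  -- expand the Gram quantity using exp_sum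
  set E : Torus d L → ℝ := fun w =>
    (N : ℝ) * G2 w (θ z0) + (N : ℝ) * G2 w (θ z1) - 2 * ∑ w' ∈ P, G2 w (θ w') with hEdef
  have hinner : ∀ w : Torus d L, ∑ w' ∈ P, (c w * c w') * G2 w (θ w') = c w * E w := by
    intro w
    have h : ∀ w' ∈ P, (c w * c w') * G2 w (θ w') = c w * (c w' * G2 w (θ w')) := by
      intro w' _; ring
    rw [Finset.sum_congr rfl h, ← Finset.mul_sum]
    congr 1
    rw [hEdef, hcdef]
    exact exp_sum P hz0P hz1P (N : ℝ) (fun w' => G2 w (θ w'))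
  have hQ : ∑ w ∈ P, ∑ w' ∈ P, (c w * c w') * G2 w (θ w')
      = (N : ℝ) * E z0 + (N : ℝ) * E z1 - 2 * ∑ w ∈ P, E w := by
    rw [Finset.sum_congr rfl (fun w _ => hinner w)]
    rw [hcdef]
    exact exp_sum P hz0P hz1P (N : ℝ) E
  have hsumE : ∑ w ∈ P, E w
      = (N : ℝ) * (∑ w ∈ P, G2 w (θ z0)) + (N : ℝ) * (∑ w ∈ P, G2 w (θ z1))
        - 2 * ∑ w ∈ P, ∑ w' ∈ P, G2 w (θ w') := by
    rw [hEdef]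
    rw [Finset.sum_sub_distrib, Finset.sum_add_distrib, ← Finset.mul_sum, ← Finset.mul_sum,
      ← Finset.mul_sum]
  -- final numeric assembly
  set n : ℝ := (N : ℝ) with hndef
  have hnn : 0 ≤ n := le_of_lt hNpos
  set B : ℝ := n * M - T * (M - C) with hBdef
  have hkey : M - G2 z0 (θ z1) ≤ 16 * (M - C) := by
    have h0 : 0 ≤ n * E z0 + n * E z1 - 2 * ∑ w ∈ P, E w := by
      rw [← hQ, ← hphiAA]
      exact hGram
    have hE0le : E z0 ≤ n * M + n * G2 z0 (θ z1) - 2 * B := by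
      have h1 : n * G2 z0 (θ z0) ≤ n * M :=
        mul_le_mul_of_nonneg_left (hbdL z0 (θ z0)) hnn
      have h2 := hrow z0 hz0P
      rw [hEdef]
      simp only []
      linarith
    have hE1le : E z1 ≤ 2 * (n * M) - 2 * B := by
      have h1 : n * G2 z1 (θ z0) ≤ n * M :=
        mul_le_mul_of_nonneg_left (hbdL z1 (θ z0)) hnn
      have h2 : n * G2 z1 (θ z1) ≤ n * M :=
        mul_le_mul_of_nonneg_left (hbdL z1 (θ z1)) hnn
      have h3 := hrow z1 hz1P
      rw [hEdef]
      simp only []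
      linarith
    have hsumEge : 2 * (n * B) - 2 * (n * (n * M)) ≤ ∑ w ∈ P, E w := by
      have h1 : n * B ≤ n * (∑ w ∈ P, G2 w (θ z0)) :=
        mul_le_mul_of_nonneg_left (hcol z0 hz0P) hnn
      have h2 : n * B ≤ n * (∑ w ∈ P, G2 w (θ z1)) :=
        mul_le_mul_of_nonneg_left (hcol z1 hz1P) hnn
      rw [hsumE]
      linarith [hSS]
    have hup0 : n * E z0 ≤ n * (n * M + n * G2 z0 (θ z1) - 2 * B) :=
      mul_le_mul_of_nonneg_left hE0le hnn
    have hup1 : n * E z1 ≤ n * (2 * (n * M) - 2 * B) :=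
      mul_le_mul_of_nonneg_left hE1le hnn
    have hnB : n * B = n ^ 2 * M - 2 * (n ^ 2 * (M - C)) := by
      rw [hBdef, ← hT2N]
      ring
    nlinarith [h0, hup0, hup1, hsumEge, hnB, mul_pos hNpos hNpos]
  have hfinal : G2 z0 (θ z1) = G2 0 x := by
    rw [hTI z0 (θ z1) hz0neθz1, hθz1subz0]
  rw [hfinal] at hkey
  -- conclude with the epsilon arithmetic
  have hβpos : (0 : ℝ) < 1 / 4 - ε / 2 := by linarith
  have hβd : (1 / 4 - ε / 2 : ℝ) ^ d ≤ 1 / 16 := by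
    calc (1 / 4 - ε / 2 : ℝ) ^ d ≤ (1 / 4 : ℝ) ^ d := by
          exact pow_le_pow_left₀ (le_of_lt hβpos) (by linarith) d
      _ ≤ (1 / 4 : ℝ) ^ 2 := by
          exact pow_le_pow_of_le_one (by norm_num) (by norm_num) hd
      _ = 1 / 16 := by norm_num
  have hβdpos : (0 : ℝ) < (1 / 4 - ε / 2 : ℝ) ^ d := by positivity
  have h16 : 16 * (M - C) ≤ (M - C) / (1 / 4 - ε / 2) ^ d := by
    rw [le_div_iff₀ hβdpos]
    nlinarith
  show M - (M - C) / (1 / 4 - ε / 2) ^ d ≤ G2 0 x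
  linarith

end RPPaper
end
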